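/- Let T be a tree rooted at r and Z a set of vertices with α(T) > α(T - Z) and r α-critical in T. Then either (i) there exist two (possibly equal) vertices u, v ∈ Z ∩ V(T) such that α(T) > α(T - {u,v}) and r remains α-critical in T - {u,v}, or (ii) there exists a vertex u ∈ Z ∩ V(T) such that α(T) > α(T - u) and r is not α-critical in T - u. -/

import Mathlib

open SimpleGraph

/-- The maximum size of an independent set of `G` contained in the vertex set `A`
(i.e. the independence number of the induced subgraph `G[A]`). -/
noncomputable def alphaOn {V : Type*} [Fintype V] (G : SimpleGraph V) (A : Set V) : ℕ :=
  sSup {n | ∃ s : Finset V, ↑s ⊆ A ∧ (↑s : Set V).Pairwise (fun a b => ¬ G.Adj a b) ∧ s.card = n}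

/-- The open neighborhood of a set of vertices. -/
def nbhd {V : Type*} (G : SimpleGraph V) (S : Set V) : Set V :=
  {v | v ∉ S ∧ ∃ u ∈ S, G.Adj u v}

/-- `v` is α-critical in the induced subgraph `G[A]`. -/
def critOn {V : Type*} [Fintype V] (G : SimpleGraph V) (A : Set V) (v : V) : Prop :=
  alphaOn G A = 1 + alphaOn G (A \ {v})

/-- For a tree `T` rooted at `r`, the vertex set of the subtree rooted at `a`:
those vertices reachable from `a` without passing through `r`. -/
def descend {V : Type*} (T : SimpleGraph V) (r a : V) : Set V :=
  {v | ∃ p : T.Walk a v, r ∉ p.support}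

/-- The connected component of `v₀` in `G - X`: vertices reachable from `v₀` avoiding `X`. -/
def avoidComp {V : Type*} (G : SimpleGraph V) (X : Set V) (v₀ : V) : Set V :=
  {v | ∃ p : G.Walk v₀ v, ∀ x ∈ p.support, x ∉ X}

namespace Stmt8

open scoped Classical
set_option linter.unusedSectionVars false
set_option linter.unusedVariables false
set_option maxHeartbeats 2000000

variable {V : Type*} [Fintype V] {T : SimpleGraph V}

/-- `s` is an independent set of `T` inside `A`. -/
def IsIS (T : SimpleGraph V) (A : Set V) (s : Finset V) : Prop :=
  ↑s ⊆ A ∧ (↑s : Set V).Pairwise (fun a b => ¬ T.Adj a b)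

/-- no edges between `B` and `C` -/
def Sep (T : SimpleGraph V) (B C : Set V) : Prop :=
  ∀ ⦃b⦄, b ∈ B → ∀ ⦃c⦄, c ∈ C → ¬ T.Adj b c

/-- connected component of `w` within vertex set `S` -/
def comp (T : SimpleGraph V) (S : Set V) (w : V) : Set V :=
  {v | ∃ p : T.Walk w v, ∀ x ∈ p.support, x ∈ S}

def Gstat (T : SimpleGraph V) (A : Set V) : Prop :=
  ∀ (r : V) (Z : Set V), critOn T A r → alphaOn T (A \ Z) < alphaOn T A →
    (∃ u ∈ Z, ∃ v ∈ Z, alphaOn T (A \ {u, v}) < alphaOn T A ∧ critOn T (A \ {u, v}) r) ∨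
    (∃ u ∈ Z, alphaOn T (A \ {u}) < alphaOn T A ∧ ¬ critOn T (A \ {u}) r)

def Mstat (T : SimpleGraph V) (E : Set V) : Prop :=
  ∀ (Z : Set V), alphaOn T (E \ Z) < alphaOn T E →
    (∀ z ∈ Z, alphaOn T (E \ {z}) = alphaOn T E) →
    ∃ u ∈ Z, ∃ v ∈ Z, alphaOn T (E \ {u, v}) < alphaOn T E



lemma IsIS.mono {A B : Set V} {s : Finset V} (hAB : A ⊆ B) (h : IsIS T A s) : IsIS T B s :=
  ⟨h.1.trans hAB, h.2⟩

lemma IsIS.subset {A : Set V} {s t : Finset V} (hts : t ⊆ s) (h : IsIS T A s) : IsIS T A t :=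
  ⟨(Finset.coe_subset.2 hts).trans h.1, h.2.mono (Finset.coe_subset.2 hts)⟩

lemma alphaOn_def (A : Set V) :
    alphaOn T A = sSup {n | ∃ s : Finset V, IsIS T A s ∧ s.card = n} := by
  unfold alphaOn IsIS
  congr 1
  ext n
  constructor
  · rintro ⟨s, h1, h2, h3⟩; exact ⟨s, ⟨h1, h2⟩, h3⟩
  · rintro ⟨s, ⟨h1, h2⟩, h3⟩; exact ⟨s, h1, h2, h3⟩

lemma alphaOn_bddAbove (A : Set V) :
    BddAbove {n | ∃ s : Finset V, IsIS T A s ∧ s.card = n} := by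
  refine ⟨Fintype.card V, ?_⟩
  rintro n ⟨s, _, rfl⟩
  exact Finset.card_le_univ s

lemma alphaOn_nonempty (A : Set V) :
    Set.Nonempty {n | ∃ s : Finset V, IsIS T A s ∧ s.card = n} :=
  ⟨0, ∅, ⟨by simp, by simp⟩, by simp⟩

lemma IsIS.card_le_alphaOn {A : Set V} {s : Finset V} (h : IsIS T A s) :
    s.card ≤ alphaOn T A := by
  rw [alphaOn_def]
  exact le_csSup (alphaOn_bddAbove A) ⟨s, h, rfl⟩

lemma exists_maxIS (A : Set V) : ∃ s : Finset V, IsIS T A s ∧ s.card = alphaOn T A := by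
  have := Nat.sSup_mem (alphaOn_nonempty (T := T) A) (alphaOn_bddAbove A)
  rw [alphaOn_def]
  exact this

lemma alphaOn_le {A : Set V} {m : ℕ} (h : ∀ s : Finset V, IsIS T A s → s.card ≤ m) :
    alphaOn T A ≤ m := by
  rw [alphaOn_def]
  apply csSup_le (alphaOn_nonempty A)
  rintro n ⟨s, hs, rfl⟩
  exact h s hs

lemma alphaOn_mono {A B : Set V} (h : A ⊆ B) : alphaOn T A ≤ alphaOn T B := by
  apply alphaOn_le
  intro s hs
  exact (hs.mono h).card_le_alphaOn

lemma lt_alphaOn_of_lt {A B : Set V} {s : Finset V} (hs : IsIS T A s)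
    (h : alphaOn T B < s.card) : alphaOn T B < alphaOn T A :=
  lt_of_lt_of_le h hs.card_le_alphaOn

/-- removing one vertex drops alpha by at most one -/
lemma alphaOn_le_diff_singleton_add_one (A : Set V) (v : V) :
    alphaOn T A ≤ alphaOn T (A \ {v}) + 1 := by
  obtain ⟨s, hs, hcard⟩ := exists_maxIS (T := T) A
  have hsub : ↑(s.erase v) ⊆ (↑s : Set V) := by
    intro x hx; simp only [Finset.coe_erase, Set.mem_diff] at hx; exact hx.1
  have h1 : IsIS T (A \ {v}) (s.erase v) := by
    refine ⟨?_, hs.2.mono hsub⟩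
    intro x hx
    simp only [Finset.coe_erase, Set.mem_diff] at hx
    exact ⟨hs.1 hx.1, hx.2⟩
  have h2 : s.card ≤ (s.erase v).card + 1 := by
    by_cases hv : v ∈ s
    · rw [Finset.card_erase_of_mem hv]; omega
    · rw [Finset.erase_eq_of_notMem hv]; omega
  calc alphaOn T A = s.card := hcard.symm
    _ ≤ (s.erase v).card + 1 := h2
    _ ≤ alphaOn T (A \ {v}) + 1 := Nat.add_le_add_right h1.card_le_alphaOn 1

-- ###### PART B


lemma Sep.symm {B C : Set V} (h : Sep T B C) : Sep T C B :=
  fun c hc b hb hadj => h hb hc hadj.symm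

lemma Sep.mono {B C B' C' : Set V} (hB : B' ⊆ B) (hC : C' ⊆ C) (h : Sep T B C) :
    Sep T B' C' := fun b hb c hc => h (hB hb) (hC hc)

lemma alphaOn_split {A B C : Set V} (h : A ⊆ B ∪ C) :
    alphaOn T A ≤ alphaOn T B + alphaOn T C := by
  apply alphaOn_le
  intro s hs
  have h1 : IsIS T B (s.filter (· ∈ B)) := by
    constructor
    · intro x hx
      simp only [Finset.coe_filter, Set.mem_setOf_eq] at hx
      exact hx.2
    · exact hs.2.mono (by intro x hx; simp only [Finset.coe_filter, Set.mem_setOf_eq] at hx; exact hx.1)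
  have h2 : IsIS T C (s.filter (· ∉ B)) := by
    constructor
    · intro x hx
      simp only [Finset.coe_filter, Set.mem_setOf_eq] at hx
      rcases h (hs.1 hx.1) with hB | hC
      · exact absurd hB hx.2
      · exact hC
    · exact hs.2.mono (by intro x hx; simp only [Finset.coe_filter, Set.mem_setOf_eq] at hx; exact hx.1)
  calc s.card = (s.filter (· ∈ B)).card + (s.filter (· ∉ B)).card :=
        (Finset.card_filter_add_card_filter_not _).symm
    _ ≤ alphaOn T B + alphaOn T C := Nat.add_le_add h1.card_le_alphaOn h2.card_le_alphaOn

lemma alphaOn_union_ge {B C : Set V} (hd : Disjoint B C) (hsep : Sep T B C) :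
    alphaOn T B + alphaOn T C ≤ alphaOn T (B ∪ C) := by
  obtain ⟨s, hs, hscard⟩ := exists_maxIS (T := T) B
  obtain ⟨t, ht, htcard⟩ := exists_maxIS (T := T) C
  have hdisj : Disjoint s t := by
    rw [Finset.disjoint_left]
    intro a has hat
    exact (hd.le_bot ⟨hs.1 has, ht.1 hat⟩ : a ∈ (⊥ : Set V)).elim
  have hIS : IsIS T (B ∪ C) (s ∪ t) := by
    constructor
    · intro x hx
      rcases Finset.mem_coe.1 (by exact_mod_cast hx) |> Finset.mem_union.1 with h' | h'
      · exact Or.inl (hs.1 h')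
      · exact Or.inr (ht.1 h')
    · intro a ha b hb hab
      rcases Finset.mem_union.1 (by exact_mod_cast ha) with ha' | ha' <;>
        rcases Finset.mem_union.1 (by exact_mod_cast hb) with hb' | hb'
      · exact hs.2 (by exact_mod_cast ha') (by exact_mod_cast hb') hab
      · exact hsep (hs.1 ha') (ht.1 hb')
      · exact fun hadj => hsep (hs.1 hb') (ht.1 ha') hadj.symm
      · exact ht.2 (by exact_mod_cast ha') (by exact_mod_cast hb') hab
  calc alphaOn T B + alphaOn T C = s.card + t.card := by rw [hscard, htcard]
    _ = (s ∪ t).card := (Finset.card_union_of_disjoint hdisj).symm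
    _ ≤ alphaOn T (B ∪ C) := hIS.card_le_alphaOn

/-- exact additivity for separated disjoint union -/
lemma alphaOn_union_eq {B C : Set V} (hd : Disjoint B C) (hsep : Sep T B C) :
    alphaOn T (B ∪ C) = alphaOn T B + alphaOn T C :=
  le_antisymm (alphaOn_split le_rfl) (alphaOn_union_ge hd hsep)

lemma critOn_iff {A : Set V} {v : V} :
    critOn T A v ↔ alphaOn T (A \ {v}) < alphaOn T A := by
  unfold critOn
  constructor
  · intro h; omega
  · intro h
    have := alphaOn_le_diff_singleton_add_one (T := T) A v
    omega

lemma critOn.mem_max {A : Set V} {v : V} (hc : critOn T A v) {s : Finset V}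
    (hs : IsIS T A s) (hcard : s.card = alphaOn T A) : v ∈ s := by
  by_contra hv
  have hsub : IsIS T (A \ {v}) s := by
    refine ⟨?_, hs.2⟩
    intro x hx
    refine ⟨hs.1 hx, ?_⟩
    simp only [Set.mem_singleton_iff]
    rintro rfl
    exact hv (by exact_mod_cast hx)
  have := hsub.card_le_alphaOn
  rw [hcard] at this
  exact absurd this (not_le.2 (critOn_iff.1 hc))

lemma alphaOn_pos_of_lt {A B : Set V} (h : alphaOn T B < alphaOn T A) :
    1 ≤ alphaOn T A := by omega

-- ###### PART C : components


lemma comp_subset {S : Set V} {w : V} : comp T S w ⊆ S := by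
  rintro v ⟨p, hp⟩
  exact hp v p.end_mem_support

lemma mem_comp_self {S : Set V} {w : V} (hw : w ∈ S) : w ∈ comp T S w :=
  ⟨Walk.nil, by simp [hw]⟩

lemma mem_comp_of_mem_support {S : Set V} {w v x : V} (p : T.Walk w v)
    (hp : ∀ y ∈ p.support, y ∈ S) (hx : x ∈ p.support) : x ∈ comp T S w :=
  ⟨p.takeUntil x hx, fun y hy => hp y (p.support_takeUntil_subset hx hy)⟩

lemma comp_adj_closed {S : Set V} {w v u : V} (hv : v ∈ comp T S w) (hadj : T.Adj v u)
    (hu : u ∈ S) : u ∈ comp T S w := by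
  obtain ⟨p, hp⟩ := hv
  refine ⟨p.concat hadj, ?_⟩
  intro x hx
  rw [Walk.support_concat] at hx
  simp only [List.concat_eq_append, List.mem_append, List.mem_singleton] at hx
  rcases hx with h' | h'
  · exact hp x h'
  · subst h'; exact hu

lemma comp_symm {S : Set V} {w u : V} (hu : u ∈ comp T S w) : w ∈ comp T S u := by
  obtain ⟨p, hp⟩ := hu
  exact ⟨p.reverse, fun x hx => hp x (by rwa [Walk.support_reverse, List.mem_reverse] at hx)⟩

lemma comp_mono_mem {S : Set V} {w u : V} (hu : u ∈ comp T S w) :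
    comp T S u ⊆ comp T S w := by
  obtain ⟨p, hp⟩ := hu
  rintro v ⟨q, hq⟩
  refine ⟨p.append q, ?_⟩
  intro x hx
  rw [Walk.support_append] at hx
  rcases List.mem_append.1 hx with h' | h'
  · exact hp x h'
  · exact hq x (List.mem_of_mem_tail h')

lemma comp_eq_of_mem {S : Set V} {w u : V} (hu : u ∈ comp T S w) :
    comp T S u = comp T S w :=
  Set.Subset.antisymm (comp_mono_mem hu) (comp_mono_mem (comp_symm hu))

lemma sep_comp {S : Set V} {w : V} : Sep T (comp T S w) (S \ comp T S w) := by
  intro b hb c hc hadj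
  exact hc.2 (comp_adj_closed hb hadj hc.1)

/-- walks within a component stay in the component -/
lemma exists_walk_in_comp {S : Set V} {w u v : V} (hu : u ∈ comp T S w)
    (hv : v ∈ comp T S w) : ∃ p : T.Walk u v, ∀ x ∈ p.support, x ∈ comp T S w := by
  obtain ⟨p, hp⟩ := hu
  obtain ⟨q, hq⟩ := hv
  refine ⟨p.reverse.append q, ?_⟩
  intro x hx
  rw [Walk.support_append] at hx
  rcases List.mem_append.1 hx with h' | h'
  · rw [Walk.support_reverse, List.mem_reverse] at h'
    exact mem_comp_of_mem_support p hp h'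
  · exact mem_comp_of_mem_support q hq (List.mem_of_mem_tail h')

/-- select a component witnessing the alpha drop -/
lemma select (Z : Set V) : ∀ n (S : Set V), S.ncard ≤ n →
    alphaOn T (S \ Z) < alphaOn T S →
    ∃ w ∈ S, alphaOn T (comp T S w \ Z) < alphaOn T (comp T S w) := by
  intro n
  induction n with
  | zero =>
    intro S hS h
    interval_cases hn : S.ncard
    · rw [(Set.ncard_eq_zero (Set.toFinite S)).1 hn] at h
      simp only [Set.empty_diff] at h
      omega
  | succ n ih =>
    intro S hS h
    have h1 : 1 ≤ alphaOn T S := by omega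
    obtain ⟨s, hs, hscard⟩ := exists_maxIS (T := T) S
    have hsne : s.Nonempty := Finset.card_pos.1 (by omega)
    obtain ⟨w₀, hw₀⟩ := hsne
    have hw₀S : w₀ ∈ S := hs.1 hw₀
    set E := comp T S w₀ with hE
    set F := S \ E with hF
    have hES : E ⊆ S := comp_subset
    have hUn : S = E ∪ F := (Set.union_diff_cancel hES).symm
    have hdisj : Disjoint E F := Set.disjoint_sdiff_right
    have hsep : Sep T E F := sep_comp
    have hS_eq : alphaOn T S = alphaOn T E + alphaOn T F := by
      rw [hUn] at *
      exact alphaOn_union_eq hdisj hsep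
    have hSZ : alphaOn T (S \ Z) = alphaOn T (E \ Z) + alphaOn T (F \ Z) := by
      have : S \ Z = (E \ Z) ∪ (F \ Z) := by
        rw [hUn, Set.union_diff_distrib]
      rw [this]
      exact alphaOn_union_eq (hdisj.mono Set.diff_subset Set.diff_subset)
        (hsep.mono Set.diff_subset Set.diff_subset)
    by_cases hEdrop : alphaOn T (E \ Z) < alphaOn T E
    · exact ⟨w₀, hw₀S, hEdrop⟩
    · have hEeq : alphaOn T (E \ Z) = alphaOn T E :=
        le_antisymm (alphaOn_mono Set.diff_subset) (not_lt.1 hEdrop)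
      have hFdrop : alphaOn T (F \ Z) < alphaOn T F := by omega
      have hFcard : F.ncard ≤ n := by
        have hw₀E : w₀ ∈ E := mem_comp_self hw₀S
        have : F ⊂ S := ⟨Set.diff_subset, fun hSF => (hSF hw₀S).2 hw₀E⟩
        have := Set.ncard_lt_ncard this (Set.toFinite S)
        omega
      obtain ⟨w, hwF, hw⟩ := ih F hFcard hFdrop
      refine ⟨w, Set.diff_subset hwF, ?_⟩
      have hcompeq : comp T F w = comp T S w := by
        apply Set.Subset.antisymm
        · rintro v ⟨p, hp⟩
          exact ⟨p, fun x hx => (hp x hx).1⟩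
        · rintro v ⟨p, hp⟩
          refine ⟨p, fun x hx => ?_⟩
          refine ⟨hp x hx, fun hxE => ?_⟩
          have hxcomp : x ∈ comp T S w := mem_comp_of_mem_support p hp hx
          have : w ∈ comp T S x := comp_symm hxcomp
          have : w ∈ comp T S w₀ := comp_eq_of_mem hxE ▸ this
          exact hwF.2 this
      rw [hcompeq] at hw
      exact hw

lemma concat_isPath {u v w : V} {p : T.Walk u v} (hp : p.IsPath) (h : T.Adj v w)
    (hw : w ∉ p.support) : (p.concat h).IsPath := by
  rw [Walk.isPath_def, Walk.support_concat]
  rw [List.nodup_append]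
  refine ⟨hp.support_nodup, List.nodup_singleton w, fun a ha b hb => ?_⟩
  simp only [List.mem_singleton] at hb
  subst hb
  exact fun h => hw (h ▸ ha)

/-- In an acyclic graph, a vertex cannot have two distinct neighbors joined by a walk
avoiding it. -/
lemma no_two_nbrs (hac : T.IsAcyclic) {x y₁ y₂ : V} (h1 : T.Adj x y₁) (h2 : T.Adj x y₂)
    (hne : y₁ ≠ y₂) (p : T.Walk y₁ y₂) (hx : x ∉ p.support) : False := by
  classical
  have hq : p.bypass.IsPath := p.bypass_isPath
  have hqs : x ∉ p.bypass.support := fun h => hx (p.support_bypass_subset h)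
  have hcyc : (Walk.cons h1 (p.bypass.concat h2.symm)).IsCycle := by
    rw [Walk.cons_isCycle_iff]
    constructor
    · exact concat_isPath hq h2.symm hqs
    · rw [Walk.edges_concat]
      simp only [List.concat_eq_append, List.mem_append, List.mem_singleton]
      rintro (h | h)
      · exact hqs (p.bypass.fst_mem_support_of_mem_edges h)
      · rw [Sym2.eq_iff] at h
        rcases h with ⟨rfl, rfl⟩ | ⟨h'', h'⟩
        · exact hne rfl
        · exact hne h'
  exact hac _ hcyc

/-- longest-path argument: a nonempty finite set with no isolated vertex (w.r.t. the set)
contains a vertex with a unique neighbor in the set. -/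
lemma exists_leaf (hac : T.IsAcyclic) (S : Set V) (hne : S.Nonempty)
    (hniso : ∀ v ∈ S, ∃ u ∈ S, T.Adj v u) :
    ∃ ℓ ∈ S, ∃ w ∈ S, T.Adj ℓ w ∧ ∀ u ∈ S, T.Adj ℓ u → u = w := by
  classical
  set P := {n | ∃ a b : V, ∃ p : T.Walk a b, p.IsPath ∧ (∀ x ∈ p.support, x ∈ S) ∧ p.length = n}
    with hP
  obtain ⟨v, hv⟩ := hne
  obtain ⟨u, huS, hadj⟩ := hniso v hv
  have hPne : P.Nonempty := by
    refine ⟨1, v, u, Walk.cons hadj Walk.nil, ?_, ?_, by simp⟩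
    · rw [Walk.cons_isPath_iff]
      refine ⟨Walk.IsPath.nil, ?_⟩
      simp only [Walk.support_nil, List.mem_singleton]
      exact hadj.ne
    · intro x hx
      simp only [Walk.support_cons, Walk.support_nil, List.mem_cons, List.mem_singleton] at hx
      rcases hx with rfl | hx
      · exact hv
      · simp at hx; subst hx; exact huS
  have hPbdd : BddAbove P := by
    refine ⟨Fintype.card V, ?_⟩
    rintro n ⟨a, b, p, hp, _, rfl⟩
    exact le_of_lt hp.length_lt
  obtain ⟨a, b, p, hp, hpS, hplen⟩ := Nat.sSup_mem hPne hPbdd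
  have hlen1 : 1 ≤ p.length := by
    have h1P : (1 : ℕ) ∈ P := by
      refine ⟨v, u, Walk.cons hadj Walk.nil, ?_, ?_, by simp⟩
      · rw [Walk.cons_isPath_iff]
        refine ⟨Walk.IsPath.nil, ?_⟩
        simp only [Walk.support_nil, List.mem_singleton]
        exact hadj.ne
      · intro x hx
        simp only [Walk.support_cons, Walk.support_nil, List.mem_cons, List.mem_singleton] at hx
        rcases hx with rfl | hx
        · exact hv
        · simp at hx; subst hx; exact huS
    have := le_csSup hPbdd h1P
    omega
  have hba : b ≠ a := by
    rintro rfl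
    rw [Walk.isPath_iff_eq_nil] at hp
    subst hp
    simp at hlen1
  obtain ⟨w, h, q', hq'⟩ := Walk.exists_eq_cons_of_ne hba p.reverse
  have hqpath : p.reverse.IsPath := (Walk.isPath_reverse_iff p).2 hp
  have hqS : ∀ x ∈ p.reverse.support, x ∈ S := by
    intro x hx
    rw [Walk.support_reverse, List.mem_reverse] at hx
    exact hpS x hx
  have hbS : b ∈ S := hqS b p.reverse.start_mem_support
  have hwS : w ∈ S := hqS w (by rw [hq', Walk.support_cons]; exact List.mem_cons_of_mem _ q'.start_mem_support)
  refine ⟨b, hbS, w, hwS, h, ?_⟩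
  intro z hzS hadjz
  by_contra hzw
  have hbnotq' : b ∉ q'.support := by
    have := hqpath
    rw [hq', Walk.cons_isPath_iff] at this
    exact this.2
  by_cases hzsup : z ∈ p.reverse.support
  · -- z on the path: build a cycle
    have hzq' : z ∈ q'.support := by
      rw [hq', Walk.support_cons] at hzsup
      rcases List.mem_cons.1 hzsup with rfl | h'
      · exact absurd rfl hadjz.ne'
      · exact h'
    have hq'path : q'.IsPath := by
      have := hqpath; rw [hq', Walk.cons_isPath_iff] at this; exact this.1
    -- walk from z to w inside q', avoiding b
    apply no_two_nbrs hac hadjz h hzw ((q'.takeUntil z hzq').reverse)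
    rw [Walk.support_reverse, List.mem_reverse]
    intro hb
    exact hbnotq' (q'.support_takeUntil_subset hzq' hb)
  · -- z not on the path: extend the path, contradicting maximality
    have hext : (p.length + 1) ∈ P := by
      refine ⟨z, a, Walk.cons hadjz.symm p.reverse, ?_, ?_, by simp⟩
      · rw [Walk.cons_isPath_iff]
        exact ⟨hqpath, hzsup⟩
      · intro x hx
        rw [Walk.support_cons] at hx
        rcases List.mem_cons.1 hx with rfl | h'
        · exact hzS
        · exact hqS x h'
    have := le_csSup hPbdd hext
    omega

-- ###### PART E : glue helpers

lemma alphaOn_empty : alphaOn T (∅ : Set V) = 0 := by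
  refine le_antisymm (alphaOn_le fun s hs => ?_) (Nat.zero_le _)
  have : s = ∅ := Finset.coe_eq_empty.1 (Set.subset_empty_iff.1 hs.1)
  simp [this]

lemma diff_pair (A : Set V) (u v : V) : A \ {u, v} = (A \ {u}) \ {v} := by
  rw [Set.diff_diff, Set.insert_eq]

lemma diff_pair_of_not_mem_left {A : Set V} {u : V} (v : V) (hu : u ∉ A) :
    A \ {u, v} = A \ {v} := by
  rw [diff_pair, Set.diff_singleton_eq_self hu]

lemma diff_pair_of_not_mem_right {A : Set V} {v : V} (u : V) (hv : v ∉ A) :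
    A \ {u, v} = A \ {u} := by
  rw [diff_pair, Set.diff_singleton_eq_self]
  intro h
  exact hv h.1

/-- adding a vertex nonadjacent to everything in `B` -/
lemma alphaOn_insert_ge {A B : Set V} {v : V} (hv : v ∈ A) (hB : B ⊆ A) (hvB : v ∉ B)
    (hnadj : ∀ u ∈ B, ¬T.Adj v u) : alphaOn T B + 1 ≤ alphaOn T A := by
  obtain ⟨s, hs, hcard⟩ := exists_maxIS (T := T) B
  have hvs : v ∉ s := fun h => hvB (hs.1 h)
  have hIS : IsIS T A (insert v s) := by
    constructor
    · rw [Finset.coe_insert]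
      exact Set.insert_subset hv (hs.1.trans hB)
    · haveI : Std.Symm (fun a b => ¬T.Adj a b) := ⟨fun a b (hab : ¬T.Adj a b) hadj => hab hadj.symm⟩
      rw [Finset.coe_insert,
        Set.pairwise_insert_of_symm]
      exact ⟨hs.2, fun b hb _ => hnadj b (hs.1 hb)⟩
  calc alphaOn T B + 1 = (insert v s).card := by
        rw [Finset.card_insert_of_notMem hvs, hcard]
    _ ≤ alphaOn T A := hIS.card_le_alphaOn

/-- union of witnesses inside a bigger set -/
lemma alphaOn_ge_union {X Y W : Set V} (hd : Disjoint X Y) (hsep : Sep T X Y)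
    (hsub : X ∪ Y ⊆ W) : alphaOn T X + alphaOn T Y ≤ alphaOn T W :=
  (alphaOn_union_ge hd hsep).trans (alphaOn_mono hsub)

-- ###### statements




lemma IsIS.not_adj {A : Set V} {s : Finset V} (hs : IsIS T A s) {a b : V}
    (ha : a ∈ s) (hb : b ∈ s) (hne : a ≠ b) : ¬T.Adj a b :=
  hs.2 (by exact_mod_cast ha) (by exact_mod_cast hb) hne

lemma IsIS.insert_mem {A : Set V} {s : Finset V} (hs : IsIS T A s) {v : V} (hv : v ∈ A)
    (hnadj : ∀ u ∈ s, ¬T.Adj v u) : IsIS T A (insert v s) := by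
  constructor
  · rw [Finset.coe_insert]
    exact Set.insert_subset hv hs.1
  · haveI : Std.Symm (fun a b => ¬T.Adj a b) := ⟨fun a b (hab : ¬T.Adj a b) hadj => hab hadj.symm⟩
    rw [Finset.coe_insert,
      Set.pairwise_insert_of_symm]
    exact ⟨hs.2, fun b hb _ => hnadj b (by exact_mod_cast hb)⟩

-- ###### PART M

lemma M_ind (hac : T.IsAcyclic) :
    ∀ (k n : ℕ), (∀ A : Set V, A.ncard ≤ n → Gstat T A) →
      ∀ E : Set V, E.ncard ≤ k → E.ncard ≤ n → Mstat T E := by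
  intro k
  induction k with
  | zero =>
    intro n hG E hk _ Z h2 _
    rw [Set.ncard_eq_zero (Set.toFinite E) |>.1 (Nat.le_zero.1 hk)] at h2
    simp only [Set.empty_diff, alphaOn_empty] at h2
    omega
  | succ k ih =>
    intro n hG E hk hn Z h2 h3
    set a := alphaOn T E with ha
    by_cases hcrit : ∃ w, critOn T E w
    · obtain ⟨w, hw⟩ := hcrit
      rcases hG E hn w Z hw h2 with ⟨u, hu, v, hv, hdrop, _⟩ | ⟨u, hu, hdrop, _⟩
      · exact ⟨u, hu, v, hv, hdrop⟩
      · rw [h3 u hu] at hdrop; omega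
    push_neg at hcrit
    have hnc : ∀ w : V, alphaOn T (E \ {w}) = a := by
      intro w
      have := hcrit w
      rw [critOn_iff] at this
      exact le_antisymm (alphaOn_mono Set.diff_subset) (not_lt.1 this)
    have ha1 : 1 ≤ a := by omega
    have hEne : E.Nonempty := by
      rcases Set.eq_empty_or_nonempty E with rfl | h
      · rw [ha, alphaOn_empty] at ha1; omega
      · exact h
    have hniso : ∀ v ∈ E, ∃ u ∈ E, T.Adj v u := by
      intro v hv
      by_contra hno
      push_neg at hno
      have : alphaOn T (E \ {v}) + 1 ≤ a := by
        apply alphaOn_insert_ge hv Set.diff_subset (by simp)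
        intro u hu
        exact fun hadj => hno u hu.1 hadj
      rw [hnc v] at this; omega
    obtain ⟨ℓ, hℓE, w, hwE, hadj, huniq⟩ := exists_leaf hac E hEne hniso
    have hℓw : ℓ ≠ w := hadj.ne
    have f1 : alphaOn T (E \ {ℓ}) = a := hnc ℓ
    have fℓw_lt : alphaOn T ((E \ {ℓ}) \ {w}) < a := by
      have hb : alphaOn T ((E \ {ℓ}) \ {w}) + 1 ≤ a := by
        apply alphaOn_insert_ge hℓE (Set.diff_subset.trans Set.diff_subset) (by simp)
        intro u hu hadju
        have : u = w := huniq u hu.1.1 hadju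
        exact hu.2 (by simp [this])
      omega
    have fℓw_ge : a ≤ alphaOn T ((E \ {ℓ}) \ {w}) + 1 := by
      calc a = alphaOn T (E \ {ℓ}) := f1.symm
        _ ≤ alphaOn T ((E \ {ℓ}) \ {w}) + 1 := alphaOn_le_diff_singleton_add_one _ _
    have h2ℓ : alphaOn T ((E \ {ℓ}) \ Z) < alphaOn T (E \ {ℓ}) := by
      rw [f1]
      calc alphaOn T ((E \ {ℓ}) \ Z) ≤ alphaOn T (E \ Z) :=
            alphaOn_mono (fun x hx => ⟨hx.1.1, hx.2⟩)
        _ < a := h2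
    by_cases hℓZ : ℓ ∈ Z
    · -- ℓ ∈ Z
      by_cases hcase : ∃ z ∈ Z, alphaOn T ((E \ {ℓ}) \ {z}) < alphaOn T (E \ {ℓ})
      · obtain ⟨z, hz, hdz⟩ := hcase
        refine ⟨ℓ, hℓZ, z, hz, ?_⟩
        rw [diff_pair, ← f1]
        exact hdz
      · push_neg at hcase
        have hcritw : critOn T (E \ {ℓ}) w := by
          unfold critOn; rw [f1]; omega
        have hcard : (E \ {ℓ}).ncard ≤ n :=
          le_trans (Set.ncard_le_ncard Set.diff_subset (Set.toFinite E)) hn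
        rcases hG (E \ {ℓ}) hcard w Z hcritw h2ℓ with
          ⟨u, hu, v, hv, hdrop, hcrituv⟩ | ⟨u, hu, hdrop, _⟩
        · refine ⟨u, hu, v, hv, ?_⟩
          unfold critOn at hcrituv
          have hdropuv : alphaOn T ((E \ {ℓ}) \ {u, v}) < a := by rw [← f1]; exact hdrop
          have hbound : ∀ s : Finset V, IsIS T (E \ {u, v}) s → s.card ≤ a - 1 := by
            intro s hs
            by_cases hℓs : ℓ ∈ s
            · have hws : w ∉ s := fun hws => hs.not_adj hℓs hws hℓw hadj
              have hsub2 : IsIS T (((E \ {ℓ}) \ {u, v}) \ {w}) (s.erase ℓ) := by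
                constructor
                · intro x hx
                  simp only [Finset.coe_erase, Set.mem_diff, Set.mem_singleton_iff] at hx
                  have hxs := hs.1 hx.1
                  refine ⟨⟨⟨hxs.1, hx.2⟩, hxs.2⟩, ?_⟩
                  simp only [Set.mem_singleton_iff]
                  rintro rfl
                  exact hws (by exact_mod_cast hx.1)
                · exact hs.2.mono (Finset.coe_subset.2 (Finset.erase_subset _ _))
              have hc2 := hsub2.card_le_alphaOn
              have hcards : s.card ≤ (s.erase ℓ).card + 1 := by
                rw [Finset.card_erase_of_mem hℓs]; omega
              omega
            · have hsub : IsIS T ((E \ {ℓ}) \ {u, v}) s := by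
                refine ⟨?_, hs.2⟩
                intro x hx
                have hxs := hs.1 hx
                refine ⟨⟨hxs.1, ?_⟩, hxs.2⟩
                simp only [Set.mem_singleton_iff]
                rintro rfl
                exact hℓs (by exact_mod_cast hx)
              have := hsub.card_le_alphaOn
              omega
          have := alphaOn_le hbound
          omega
        · exact absurd hdrop (not_lt.2 (hcase u hu))
    · -- ℓ ∉ Z : recurse on E' = (E \ {ℓ}) \ {w}
      set E' := (E \ {ℓ}) \ {w} with hE'
      have hE'subℓ : E' ⊆ E \ {ℓ} := Set.diff_subset
      have hE'sub : E' ⊆ E := hE'subℓ.trans Set.diff_subset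
      have haE' : alphaOn T E' + 1 = a := by omega
      have hℓE' : ℓ ∉ E' := fun h => h.1.2 rfl
      have hwE' : w ∉ E' := fun h => h.2 rfl
      have hnadjℓ : ∀ u ∈ E', ¬T.Adj ℓ u := by
        intro u hu hadju
        exact hwE' (huniq u (hE'sub hu) hadju ▸ hu)
      have h2' : alphaOn T (E' \ Z) < alphaOn T E' := by
        have hins : alphaOn T (E' \ Z) + 1 ≤ alphaOn T (E \ Z) := by
          apply alphaOn_insert_ge (A := E \ Z) (B := E' \ Z) (v := ℓ) ⟨hℓE, hℓZ⟩
            (fun x hx => ⟨hE'sub hx.1, hx.2⟩) (fun h => hℓE' h.1)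
          intro u hu
          exact hnadjℓ u hu.1
        omega
      have h3' : ∀ z ∈ Z, alphaOn T (E' \ {z}) = alphaOn T E' := by
        intro z hz
        refine le_antisymm (alphaOn_mono Set.diff_subset) ?_
        by_cases hzE' : z ∈ E'
        swap
        · rw [Set.diff_singleton_eq_self hzE']
        obtain ⟨s, hs, hscard⟩ := exists_maxIS (T := T) (E \ {z})
        rw [h3 z hz] at hscard
        have hℓz : ℓ ≠ z := fun h => hℓZ (h ▸ hz)
        have hnotboth : ¬(ℓ ∈ s ∧ w ∈ s) := fun ⟨h1', h2'⟩ => hs.not_adj h1' h2' hℓw hadj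
        have honeof : ℓ ∈ s ∨ w ∈ s := by
          by_contra hno
          push_neg at hno
          have hins : IsIS T (E \ {z}) (insert ℓ s) := by
            apply hs.insert_mem ⟨hℓE, hℓz⟩
            intro x hx hadjx
            exact hno.2 (huniq x (hs.1 hx).1 hadjx ▸ hx)
          have hle := hins.card_le_alphaOn
          rw [Finset.card_insert_of_notMem hno.1, hscard, h3 z hz] at hle
          omega
        have hcard' : a - 1 ≤ ((s.erase ℓ).erase w).card := by
          rcases honeof with h | h
          · have hwne : w ∉ s.erase ℓ := fun hh => hnotboth ⟨h, Finset.mem_of_mem_erase hh⟩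
            rw [Finset.erase_eq_of_notMem hwne, Finset.card_erase_of_mem h, hscard]
          · by_cases hl : ℓ ∈ s
            · exact absurd ⟨hl, h⟩ hnotboth
            · rw [Finset.erase_eq_of_notMem hl, Finset.card_erase_of_mem h, hscard]
        have hsub : IsIS T (E' \ {z}) ((s.erase ℓ).erase w) := by
          constructor
          · intro x hx
            simp only [Finset.coe_erase, Set.mem_diff, Set.mem_singleton_iff] at hx
            have hxs := hs.1 hx.1.1
            exact ⟨⟨⟨hxs.1, hx.1.2⟩, hx.2⟩, hxs.2⟩
          · exact hs.2.mono (Finset.coe_subset.2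
              ((Finset.erase_subset _ _).trans (Finset.erase_subset _ _)))
        have := hsub.card_le_alphaOn
        omega
      have hE'k : E'.ncard ≤ k := by
        have : E'.ncard < E.ncard :=
          Set.ncard_lt_ncard ⟨hE'sub, fun hsub' => hℓE' (hsub' hℓE)⟩ (Set.toFinite E)
        omega
      have hE'n : E'.ncard ≤ n :=
        le_trans (Set.ncard_le_ncard hE'sub (Set.toFinite E)) hn
      obtain ⟨u, hu, v, hv, hdrop'⟩ := ih n hG E' hE'k hE'n Z h2' h3'
      refine ⟨u, hu, v, hv, ?_⟩
      have hbound : ∀ s : Finset V, IsIS T (E \ {u, v}) s → s.card ≤ a - 1 := by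
        intro s hs
        by_cases hboth : ℓ ∈ s ∨ w ∈ s
        · have hnb : ¬(ℓ ∈ s ∧ w ∈ s) := fun ⟨h1', h2''⟩ => hs.not_adj h1' h2'' hℓw hadj
          have hcards : s.card ≤ ((s.erase ℓ).erase w).card + 1 := by
            rcases hboth with h | h
            · have hwne : w ∉ s.erase ℓ := fun hh => hnb ⟨h, Finset.mem_of_mem_erase hh⟩
              rw [Finset.erase_eq_of_notMem hwne, Finset.card_erase_of_mem h]
              omega
            · by_cases hl : ℓ ∈ s
              · exact absurd ⟨hl, h⟩ hnb
              · rw [Finset.erase_eq_of_notMem hl, Finset.card_erase_of_mem h]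
                omega
          have hsub : IsIS T (E' \ {u, v}) ((s.erase ℓ).erase w) := by
            constructor
            · intro x hx
              simp only [Finset.coe_erase, Set.mem_diff, Set.mem_singleton_iff] at hx
              have hxs := hs.1 hx.1.1
              exact ⟨⟨⟨hxs.1, hx.1.2⟩, hx.2⟩, hxs.2⟩
            · exact hs.2.mono (Finset.coe_subset.2
                ((Finset.erase_subset _ _).trans (Finset.erase_subset _ _)))
          have hle := hsub.card_le_alphaOn
          have : alphaOn T (E' \ {u, v}) < alphaOn T E' := hdrop'
          omega
        · push_neg at hboth
          have hins : IsIS T E (insert ℓ s) := by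
            apply (hs.mono Set.diff_subset).insert_mem hℓE
            intro x hx hadjx
            exact hboth.2 (huniq x (hs.1 hx).1 hadjx ▸ hx)
          have hle := hins.card_le_alphaOn
          rw [Finset.card_insert_of_notMem hboth.1] at hle
          omega
      have := alphaOn_le hbound
      omega


-- ###### PART G

lemma G_all (hac : T.IsAcyclic) : ∀ (n : ℕ) (A : Set V), A.ncard ≤ n → Gstat T A := by
  intro n
  induction n using Nat.strong_induction_on with
  | _ n ih =>
  intro A hA r Z hc h
  set a := alphaOn T A with ha
  have hceq : alphaOn T A = 1 + alphaOn T (A \ {r}) := hc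
  have hrA : r ∈ A := by
    by_contra hr
    rw [Set.diff_singleton_eq_self hr] at hceq
    omega
  by_cases hrZ : r ∈ Z
  · refine Or.inr ⟨r, hrZ, by omega, ?_⟩
    intro hcon
    have hcon' : alphaOn T (A \ {r}) = 1 + alphaOn T ((A \ {r}) \ {r}) := hcon
    have hrnot : r ∉ A \ {r} := fun h' => h'.2 rfl
    rw [Set.diff_singleton_eq_self (s := A \ {r}) hrnot] at hcon'
    omega
  by_cases hZcrit : ∃ z ∈ Z, alphaOn T (A \ {z}) < a
  · obtain ⟨z, hz, hdz⟩ := hZcrit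
    by_cases hcz : critOn T (A \ {z}) r
    · refine Or.inl ⟨z, hz, z, hz, ?_, ?_⟩ <;> rw [Set.pair_eq_singleton]
      · exact hdz
      · exact hcz
    · exact Or.inr ⟨z, hz, hdz, hcz⟩
  push_neg at hZcrit
  have heqz : ∀ z ∈ Z, alphaOn T (A \ {z}) = a := fun z hz =>
    le_antisymm (alphaOn_mono Set.diff_subset) (hZcrit z hz)
  -- the set B = A minus the closed neighborhood of r
  set B : Set V := {v | v ∈ A ∧ v ≠ r ∧ ¬T.Adj r v} with hB
  have hBsubA : B ⊆ A := fun x hx => hx.1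
  have hrB : r ∉ B := fun h' => h'.2.1 rfl
  have hαB : a = 1 + alphaOn T B := by
    have h1 : alphaOn T B + 1 ≤ a :=
      alphaOn_insert_ge hrA hBsubA hrB (fun u hu => hu.2.2)
    have h2 : a ≤ alphaOn T B + 1 := by
      obtain ⟨s, hs, hscard⟩ := exists_maxIS (T := T) A
      have hrs : r ∈ s := critOn.mem_max hc hs hscard
      have hsub : IsIS T B (s.erase r) := by
        constructor
        · intro x hx
          simp only [Finset.coe_erase, Set.mem_diff, Set.mem_singleton_iff] at hx
          have hxs : x ∈ s := by exact_mod_cast hx.1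
          exact ⟨hs.1 hx.1, hx.2, hs.not_adj hrs hxs (Ne.symm hx.2)⟩
        · exact hs.2.mono (Finset.coe_subset.2 (Finset.erase_subset _ _))
      have hle := hsub.card_le_alphaOn
      rw [Finset.card_erase_of_mem hrs, hscard] at hle
      omega
    omega
  have hBZ : alphaOn T (B \ Z) < alphaOn T B := by
    have hstep : alphaOn T (B \ Z) + 1 ≤ alphaOn T (A \ Z) :=
      alphaOn_insert_ge (A := A \ Z) (B := B \ Z) ⟨hrA, hrZ⟩
        (fun x hx => ⟨hBsubA hx.1, hx.2⟩) (fun hk => hrB hk.1)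
        (fun u hu => hu.1.2.2)
    omega
  have hBz : ∀ z ∈ Z, alphaOn T (B \ {z}) = alphaOn T B := by
    intro z hz
    refine le_antisymm (alphaOn_mono Set.diff_subset) ?_
    obtain ⟨s, hs, hscard⟩ := exists_maxIS (T := T) (A \ {z})
    rw [heqz z hz] at hscard
    have hsA : IsIS T A s := hs.mono Set.diff_subset
    have hrs : r ∈ s := critOn.mem_max hc hsA hscard
    have hsub : IsIS T (B \ {z}) (s.erase r) := by
      constructor
      · intro x hx
        simp only [Finset.coe_erase, Set.mem_diff, Set.mem_singleton_iff] at hx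
        have hxs : x ∈ s := by exact_mod_cast hx.1
        have hxAz := hs.1 hx.1
        exact ⟨⟨hxAz.1, hx.2, hs.not_adj hrs hxs (Ne.symm hx.2)⟩, hxAz.2⟩
      · exact hs.2.mono (Finset.coe_subset.2 (Finset.erase_subset _ _))
    have hle := hsub.card_le_alphaOn
    rw [Finset.card_erase_of_mem hrs, hscard] at hle
    omega
  -- select a component E of B where the drop persists
  obtain ⟨w, hwB, hE2⟩ := select (T := T) Z B.ncard B le_rfl hBZ
  set E := comp T B w with hEdef
  have hEB : E ⊆ B := comp_subset
  have hrE : r ∉ E := fun h' => hrB (hEB h')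
  set F := B \ E with hF
  have hsepEF : Sep T E F := sep_comp
  have hBun : B = E ∪ F := (Set.union_diff_cancel hEB).symm
  have hdisjEF : Disjoint E F := Set.disjoint_sdiff_right
  have hαBEF : alphaOn T B = alphaOn T E + alphaOn T F := by
    rw [hBun]; exact alphaOn_union_eq hdisjEF hsepEF
  have hE3 : ∀ z ∈ Z, alphaOn T (E \ {z}) = alphaOn T E := by
    intro z hz
    refine le_antisymm (alphaOn_mono Set.diff_subset) ?_
    have hid : B \ {z} = (E \ {z}) ∪ (F \ {z}) := by rw [hBun, Set.union_diff_distrib]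
    have h1 : alphaOn T (B \ {z}) ≤ alphaOn T (E \ {z}) + alphaOn T (F \ {z}) := by
      rw [hid]; exact alphaOn_split le_rfl
    have h2 := hBz z hz
    have h3 : alphaOn T (F \ {z}) ≤ alphaOn T F := alphaOn_mono Set.diff_subset
    have h4 : alphaOn T (E \ {z}) ≤ alphaOn T E := alphaOn_mono Set.diff_subset
    omega
  have hEA' : E ⊆ A \ {r} := fun e he =>
    ⟨hBsubA (hEB he), fun h' => hrE (Set.mem_singleton_iff.1 h' ▸ he)⟩
  have hEcardlt : E.ncard < A.ncard :=
    lt_of_le_of_lt (Set.ncard_le_ncard hEA' (Set.toFinite _))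
      (Set.ncard_diff_singleton_lt_of_mem hrA)
  -- small Gstat and Mstat
  have hn1 : 1 ≤ n := by
    have := hEcardlt
    omega
  have hGsmall : ∀ A' : Set V, A'.ncard ≤ n - 1 → Gstat T A' := fun A' h' =>
    ih (n - 1) (by omega) A' h'
  have hME : Mstat T E := M_ind hac E.ncard (n - 1) hGsmall E le_rfl (by omega)
  -- does r have a neighbor x ∈ A adjacent to E ?
  by_cases hx : ∃ x ∈ A, T.Adj r x ∧ ∃ y ∈ E, T.Adj x y
  case neg =>
    -- CASE I : E is separated from the rest of A
    push_neg at hx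
    have hsepI : Sep T E (A \ E) := by
      intro b hb c hcm hadj
      by_cases hcB : c ∈ B
      · exact hcm.2 (comp_adj_closed hb hadj hcB)
      · by_cases hcr : c = r
        · subst hcr
          exact (hEB hb).2.2 hadj.symm
        · have hadjrc : T.Adj r c := by
            by_contra hnadj
            exact hcB ⟨hcm.1, hcr, hnadj⟩
          exact hx c hcm.1 hadjrc b hb hadj.symm
    obtain ⟨u, hu, v, hv, hduv⟩ := hME Z hE2 hE3
    have huE : u ∈ E := by
      by_contra huE
      rw [diff_pair_of_not_mem_left v huE, hE3 v hv] at hduv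
      omega
    have hvE : v ∈ E := by
      by_contra hvE
      rw [diff_pair_of_not_mem_right u hvE, hE3 u hu] at hduv
      omega
    have hEsubA : E ⊆ A := fun e he => hBsubA (hEB he)
    have hidA : A \ {u, v} = (E \ {u, v}) ∪ (A \ E) := by
      ext z
      constructor
      · rintro ⟨hzA, hzuv⟩
        by_cases hzE : z ∈ E
        · exact Or.inl ⟨hzE, hzuv⟩
        · exact Or.inr ⟨hzA, hzE⟩
      · rintro (⟨hzE, hzuv⟩ | ⟨hzA, hzE⟩)
        · exact ⟨hEsubA hzE, hzuv⟩
        · refine ⟨hzA, fun hzp => ?_⟩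
          simp only [Set.mem_insert_iff, Set.mem_singleton_iff] at hzp
          rcases hzp with rfl | rfl
          · exact hzE huE
          · exact hzE hvE
    have hidA0 : A = E ∪ (A \ E) := (Set.union_diff_cancel hEsubA).symm
    have hdisj2 : Disjoint E (A \ E) := Set.disjoint_sdiff_right
    have hα1 : alphaOn T (A \ {u, v}) = alphaOn T (E \ {u, v}) + alphaOn T (A \ E) := by
      rw [hidA]
      exact alphaOn_union_eq (hdisj2.mono_left Set.diff_subset)
        (hsepI.mono Set.diff_subset le_rfl)
    have hαA : a = alphaOn T E + alphaOn T (A \ E) := by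
      have h' := alphaOn_union_eq (T := T) hdisj2 hsepI
      rw [← hidA0] at h'
      exact h'
    have hrAE : r ∈ A \ E := ⟨hrA, hrE⟩
    have hidr : A \ {r} = E ∪ ((A \ E) \ {r}) := by
      ext z
      constructor
      · rintro ⟨hzA, hzr⟩
        by_cases hzE : z ∈ E
        · exact Or.inl hzE
        · exact Or.inr ⟨⟨hzA, hzE⟩, hzr⟩
      · rintro (hzE | ⟨⟨hzA, hzE⟩, hzr⟩)
        · exact ⟨hEsubA hzE, fun h' => hrE (Set.mem_singleton_iff.1 h' ▸ hzE)⟩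
        · exact ⟨hzA, hzr⟩
    have hα0 : alphaOn T (A \ {r}) = alphaOn T E + alphaOn T ((A \ E) \ {r}) := by
      rw [hidr]
      exact alphaOn_union_eq (hdisj2.mono_right Set.diff_subset)
        (hsepI.mono le_rfl Set.diff_subset)
    have hidAr : (A \ {u, v}) \ {r} = (E \ {u, v}) ∪ ((A \ E) \ {r}) := by
      rw [hidA, Set.union_diff_distrib]
      congr 1
      rw [Set.diff_singleton_eq_self]
      intro h'
      exact hrE h'.1
    have hα2 : alphaOn T ((A \ {u, v}) \ {r}) =
        alphaOn T (E \ {u, v}) + alphaOn T ((A \ E) \ {r}) := by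
      rw [hidAr]
      exact alphaOn_union_eq
        ((hdisj2.mono_left Set.diff_subset).mono_right Set.diff_subset)
        (hsepI.mono Set.diff_subset Set.diff_subset)
    refine Or.inl ⟨u, hu, v, hv, ?_, ?_⟩
    · rw [hα1]
      omega
    · show alphaOn T (A \ {u, v}) = 1 + alphaOn T ((A \ {u, v}) \ {r})
      rw [hα1, hα2]
      omega
  case pos =>
    -- CASE II
    obtain ⟨x, hxA, hrx, y0, hy0E, hxy0⟩ := hx
    have hxB : x ∉ B := fun h' => h'.2.2 hrx
    have hxE : x ∉ E := fun h' => hxB (hEB h')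
    have hyuniq : ∀ y₁ ∈ E, T.Adj x y₁ → y₁ = y0 := by
      intro y₁ h1 ha1
      by_contra hne
      obtain ⟨p, hp⟩ := exists_walk_in_comp (T := T) h1 hy0E
      exact no_two_nbrs hac ha1 hxy0 hne p (fun hmem => hxE (hp x hmem))
    have hxuniq : ∀ x', T.Adj r x' → ∀ e ∈ E, T.Adj x' e → x' = x := by
      intro x' hrx' e heE hx'e
      by_contra hne
      obtain ⟨p, hp⟩ := exists_walk_in_comp (T := T) hy0E heE
      refine no_two_nbrs hac hrx hrx' (Ne.symm hne)
        (Walk.cons hxy0 (p.concat hx'e.symm)) ?_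
      intro hmem
      rw [Walk.support_cons] at hmem
      rcases List.mem_cons.1 hmem with h' | h'
      · exact hrx.ne h'
      · rw [Walk.support_concat] at h'
        simp only [List.concat_eq_append, List.mem_append, List.mem_singleton] at h'
        rcases h' with h' | h'
        · exact hrE (hp r h')
        · exact hrx'.ne h'
    have hEsubA : E ⊆ A := fun e he => hBsubA (hEB he)
    set R := (A \ E) \ {x} with hR
    have hxnR : x ∉ R := fun h' => h'.2 rfl
    have hrR : r ∈ R := ⟨⟨hrA, hrE⟩, fun h' => hrx.ne (Set.mem_singleton_iff.1 h')⟩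
    have hRsubA : R ⊆ A := fun z hz => hz.1.1
    have hsepER : Sep T E R := by
      intro b hb c hcm hadj
      by_cases hcB : c ∈ B
      · exact hcm.1.2 (comp_adj_closed hb hadj hcB)
      · by_cases hcr : c = r
        · subst hcr
          exact (hEB hb).2.2 hadj.symm
        · have hadjrc : T.Adj r c := by
            by_contra hnadj
            exact hcB ⟨hcm.1.1, hcr, hnadj⟩
          exact hcm.2 (Set.mem_singleton_iff.2 (hxuniq c hadjrc b hb hadj.symm))
    have hdisjER : Disjoint E R :=
      (Set.disjoint_sdiff_right (s := E) (t := A)).mono_right Set.diff_subset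
    have hc1 : a = alphaOn T E + alphaOn T R := by
      have hge : alphaOn T E + alphaOn T R ≤ a :=
        alphaOn_ge_union hdisjER hsepER (Set.union_subset hEsubA hRsubA)
      have hle : a ≤ alphaOn T E + alphaOn T R := by
        obtain ⟨s, hs, hscard⟩ := exists_maxIS (T := T) A
        have hrs : r ∈ s := critOn.mem_max hc hs hscard
        have hxs : x ∉ s := fun hxs => hs.not_adj hrs hxs hrx.ne hrx
        have hsub : IsIS T (E ∪ R) s := by
          refine ⟨?_, hs.2⟩
          intro z hz'
          have hzA := hs.1 hz'
          by_cases hzE : z ∈ E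
          · exact Or.inl hzE
          · refine Or.inr ⟨⟨hzA, hzE⟩, fun hzx => ?_⟩
            rw [Set.mem_singleton_iff] at hzx
            subst hzx
            exact hxs (by exact_mod_cast hz')
        calc a = s.card := hscard.symm
          _ ≤ alphaOn T (E ∪ R) := hsub.card_le_alphaOn
          _ ≤ _ := alphaOn_split le_rfl
      omega
    have hRr : alphaOn T (R \ {r}) + 1 = alphaOn T R := by
      have hge := alphaOn_le_diff_singleton_add_one (T := T) R r
      have hle : alphaOn T E + alphaOn T (R \ {r}) ≤ alphaOn T (A \ {r}) :=
        alphaOn_ge_union (hdisjER.mono_right Set.diff_subset)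
          (hsepER.mono le_rfl Set.diff_subset)
          (Set.union_subset hEA' (fun z hz => ⟨hRsubA hz.1, hz.2⟩))
      omega
    set RNx := R \ {c | T.Adj x c} with hRNxdef
    have hRNxsub : RNx ⊆ R \ {r} := fun c hc' =>
      ⟨hc'.1, fun hcr => hc'.2 (by rw [Set.mem_singleton_iff] at hcr; subst hcr; exact hrx.symm)⟩
    have hcx : alphaOn T RNx ≤ alphaOn T (R \ {r}) := alphaOn_mono hRNxsub
    -- shared assembly
    have assemble : ∀ u v : V, u ∈ Z → v ∈ Z → u ∈ E → v ∈ E →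
        alphaOn T (E \ {u, v}) < alphaOn T E →
        2 + alphaOn T ((E \ {u, v}) \ {y0}) + alphaOn T RNx
          ≤ alphaOn T (E \ {u, v}) + alphaOn T R →
        alphaOn T (A \ {u, v}) < a ∧ critOn T (A \ {u, v}) r := by
      intro u v hu hv huE hvE he2 hK3
      have herase : ∀ s : Finset V, IsIS T (A \ {u, v}) s → x ∈ s →
          IsIS T (((E \ {u, v}) \ {y0}) ∪ RNx) (s.erase x) := by
        intro s hs hxs
        constructor
        · intro z hz
          simp only [Finset.coe_erase, Set.mem_diff, Set.mem_singleton_iff] at hz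
          have hzs : z ∈ s := by exact_mod_cast hz.1
          have hzA := hs.1 hz.1
          have hnadjxz : ¬T.Adj x z := hs.not_adj hxs hzs (Ne.symm hz.2)
          by_cases hzE : z ∈ E
          · refine Or.inl ⟨⟨hzE, hzA.2⟩, ?_⟩
            simp only [Set.mem_singleton_iff]
            rintro rfl
            exact hnadjxz hxy0
          · refine Or.inr ⟨⟨⟨hzA.1, hzE⟩, ?_⟩, hnadjxz⟩
            simp only [Set.mem_singleton_iff]
            exact hz.2
        · exact hs.2.mono (Finset.coe_subset.2 (Finset.erase_subset _ _))
      have he3le : alphaOn T ((E \ {u, v}) \ {y0}) ≤ alphaOn T (E \ {u, v}) :=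
        alphaOn_mono Set.diff_subset
      have hub1 : alphaOn T (A \ {u, v}) ≤ alphaOn T (E \ {u, v}) + alphaOn T R := by
        apply alphaOn_le
        intro s hs
        by_cases hxs : x ∈ s
        · have hsub := herase s hs hxs
          have hcount := hsub.card_le_alphaOn
          have hsplit : alphaOn T (((E \ {u, v}) \ {y0}) ∪ RNx) ≤
              alphaOn T ((E \ {u, v}) \ {y0}) + alphaOn T RNx := alphaOn_split le_rfl
          have hcards : s.card ≤ (s.erase x).card + 1 := by
            rw [Finset.card_erase_of_mem hxs]; omega
          omega
        · have hsub : IsIS T ((E \ {u, v}) ∪ R) s := by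
            refine ⟨?_, hs.2⟩
            intro z hz
            have hzA := hs.1 hz
            by_cases hzE : z ∈ E
            · exact Or.inl ⟨hzE, hzA.2⟩
            · refine Or.inr ⟨⟨hzA.1, hzE⟩, fun hzx => hxs ?_⟩
              rw [Set.mem_singleton_iff] at hzx
              subst hzx
              exact_mod_cast hz
          have hcount := hsub.card_le_alphaOn
          have hsplit : alphaOn T ((E \ {u, v}) ∪ R) ≤
              alphaOn T (E \ {u, v}) + alphaOn T R := alphaOn_split le_rfl
          omega
      have hlb1 : alphaOn T (E \ {u, v}) + alphaOn T R ≤ alphaOn T (A \ {u, v}) := by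
        apply alphaOn_ge_union (hdisjER.mono_left Set.diff_subset)
          (hsepER.mono Set.diff_subset le_rfl)
        apply Set.union_subset
        · exact fun z hz => ⟨hEsubA hz.1, hz.2⟩
        · intro z hz
          refine ⟨hRsubA hz, fun hzp => ?_⟩
          simp only [Set.mem_insert_iff, Set.mem_singleton_iff] at hzp
          rcases hzp with rfl | rfl
          · exact hz.1.2 huE
          · exact hz.1.2 hvE
      have hub2 : alphaOn T ((A \ {u, v}) \ {r}) + 1 ≤
          alphaOn T (E \ {u, v}) + alphaOn T R := by
        have hall : ∀ s : Finset V, IsIS T ((A \ {u, v}) \ {r}) s →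
            s.card + 1 ≤ alphaOn T (E \ {u, v}) + alphaOn T R := by
          intro s hs
          have hs' : IsIS T (A \ {u, v}) s := hs.mono Set.diff_subset
          by_cases hxs : x ∈ s
          · have hsub := herase s hs' hxs
            have hcount := hsub.card_le_alphaOn
            have hsplit : alphaOn T (((E \ {u, v}) \ {y0}) ∪ RNx) ≤
                alphaOn T ((E \ {u, v}) \ {y0}) + alphaOn T RNx := alphaOn_split le_rfl
            have hcards : s.card ≤ (s.erase x).card + 1 := by
              rw [Finset.card_erase_of_mem hxs]; omega
            omega
          · have hsub : IsIS T ((E \ {u, v}) ∪ (R \ {r})) s := by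
              refine ⟨?_, hs.2⟩
              intro z hz
              have hzm := hs.1 hz
              by_cases hzE : z ∈ E
              · exact Or.inl ⟨hzE, hzm.1.2⟩
              · refine Or.inr ⟨⟨⟨hzm.1.1, hzE⟩, fun hzx => hxs ?_⟩, hzm.2⟩
                rw [Set.mem_singleton_iff] at hzx
                subst hzx
                exact_mod_cast hz
            have hcount := hsub.card_le_alphaOn
            have hsplit : alphaOn T ((E \ {u, v}) ∪ (R \ {r})) ≤
                alphaOn T (E \ {u, v}) + alphaOn T (R \ {r}) := alphaOn_split le_rfl
            omega
        obtain ⟨t, ht, htcard⟩ := exists_maxIS (T := T) ((A \ {u, v}) \ {r})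
        have := hall t ht
        omega
      have hlb2 : alphaOn T (E \ {u, v}) + alphaOn T (R \ {r}) ≤
          alphaOn T ((A \ {u, v}) \ {r}) := by
        apply alphaOn_ge_union
          ((hdisjER.mono_left Set.diff_subset).mono_right Set.diff_subset)
          (hsepER.mono Set.diff_subset Set.diff_subset)
        apply Set.union_subset
        · intro z hz
          refine ⟨⟨hEsubA hz.1, hz.2⟩, fun h' => hrE (Set.mem_singleton_iff.1 h' ▸ hz.1)⟩
        · intro z hz
          refine ⟨⟨hRsubA hz.1, fun hzp => ?_⟩, hz.2⟩
          simp only [Set.mem_insert_iff, Set.mem_singleton_iff] at hzp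
          rcases hzp with rfl | rfl
          · exact hz.1.1.2 huE
          · exact hz.1.1.2 hvE
      constructor
      · omega
      · show alphaOn T (A \ {u, v}) = 1 + alphaOn T ((A \ {u, v}) \ {r})
        omega
    by_cases hφ : alphaOn T RNx + 2 ≤ alphaOn T R
    · obtain ⟨u, hu, v, hv, hduv⟩ := hME Z hE2 hE3
      have huE : u ∈ E := by
        by_contra huE'
        rw [diff_pair_of_not_mem_left v huE', hE3 v hv] at hduv
        omega
      have hvE : v ∈ E := by
        by_contra hvE'
        rw [diff_pair_of_not_mem_right u hvE', hE3 u hu] at hduv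
        omega
      have hK3 : 2 + alphaOn T ((E \ {u, v}) \ {y0}) + alphaOn T RNx
          ≤ alphaOn T (E \ {u, v}) + alphaOn T R := by
        have hm : alphaOn T ((E \ {u, v}) \ {y0}) ≤ alphaOn T (E \ {u, v}) :=
          alphaOn_mono Set.diff_subset
        omega
      obtain ⟨h1', h2'⟩ := assemble u v hu hv huE hvE hduv hK3
      exact Or.inl ⟨u, hu, v, hv, h1', h2'⟩
    · push_neg at hφ
      have hRNxeq : alphaOn T RNx + 1 = alphaOn T R := by omega
      have hxnotr : x ≠ r := fun h' => hrx.ne h'.symm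
      have hy0crit : alphaOn T (E \ {y0}) + 1 ≤ alphaOn T E := by
        have hbig : alphaOn T ((E \ {y0}) ∪ RNx) + 1 ≤ alphaOn T (A \ {r}) := by
          apply alphaOn_insert_ge (A := A \ {r}) (v := x)
            ⟨hxA, fun h' => hxnotr (Set.mem_singleton_iff.1 h')⟩
          · apply Set.union_subset
            · exact fun z hz => hEA' hz.1
            · exact fun z hz => ⟨hRsubA (hRNxsub hz).1, (hRNxsub hz).2⟩
          · rintro (h' | h')
            · exact hxE h'.1
            · exact hxnR h'.1
          · rintro z (hz | hz)
            · intro hadj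
              exact hz.2 (Set.mem_singleton_iff.2 (hyuniq z hz.1 hadj))
            · exact hz.2
        have hun : alphaOn T (E \ {y0}) + alphaOn T RNx ≤ alphaOn T ((E \ {y0}) ∪ RNx) :=
          alphaOn_union_ge
            ((hdisjER.mono_left Set.diff_subset).mono_right Set.diff_subset)
            (hsepER.mono Set.diff_subset Set.diff_subset)
        omega
      have hcrity0 : critOn T E y0 := by
        have hdd := alphaOn_le_diff_singleton_add_one (T := T) E y0
        show alphaOn T E = 1 + alphaOn T (E \ {y0})
        omega
      rcases ih E.ncard (by omega) E le_rfl y0 Z hcrity0 hE2 with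
        ⟨u, hu, v, hv, hduv, hcrituv⟩ | ⟨u, hu, hdrop, _⟩
      · have huE : u ∈ E := by
          by_contra huE'
          rw [diff_pair_of_not_mem_left v huE', hE3 v hv] at hduv
          omega
        have hvE : v ∈ E := by
          by_contra hvE'
          rw [diff_pair_of_not_mem_right u hvE', hE3 u hu] at hduv
          omega
        have hcuv : alphaOn T (E \ {u, v}) = 1 + alphaOn T ((E \ {u, v}) \ {y0}) :=
          hcrituv
        have hK3 : 2 + alphaOn T ((E \ {u, v}) \ {y0}) + alphaOn T RNx
            ≤ alphaOn T (E \ {u, v}) + alphaOn T R := by omega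
        obtain ⟨h1', h2'⟩ := assemble u v hu hv huE hvE hduv hK3
        exact Or.inl ⟨u, hu, v, hv, h1', h2'⟩
      · rw [hE3 u hu] at hdrop
        omega


end Stmt8

theorem stmt8 {V : Type*} [Fintype V] (T : SimpleGraph V) (hT : T.IsTree) (r : V) (Z : Set V)
    (h : alphaOn T Zᶜ < alphaOn T Set.univ) (hc : critOn T Set.univ r) :
    (∃ u ∈ Z, ∃ v ∈ Z, alphaOn T ({u, v} : Set V)ᶜ < alphaOn T Set.univ ∧
        critOn T ({u, v} : Set V)ᶜ r) ∨
    (∃ u ∈ Z, alphaOn T ({u} : Set V)ᶜ < alphaOn T Set.univ ∧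
        ¬ critOn T ({u} : Set V)ᶜ r) := by
  have h' : alphaOn T (Set.univ \ Z) < alphaOn T Set.univ := by
    rwa [← Set.compl_eq_univ_diff]
  rcases Stmt8.G_all hT.2 Set.univ.ncard Set.univ le_rfl r Z hc h' with
    ⟨u, hu, v, hv, h1, h2⟩ | ⟨u, hu, h1, h2⟩
  · refine Or.inl ⟨u, hu, v, hv, ?_, ?_⟩
    · rwa [Set.compl_eq_univ_diff]
    · rwa [Set.compl_eq_univ_diff]
  · refine Or.inr ⟨u, hu, ?_, ?_⟩
    · rwa [Set.compl_eq_univ_diff]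
    · rwa [Set.compl_eq_univ_diff]
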